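/- Consider the twelve linear forms on ℚ⁶ with coordinates (x, y, z, t, u, v): x, x−u, x−v, y, y−u, y−v, z, z−u, z−v, t, t−u, t−v. The set of points P of the projective space ℙ⁵(ℚ) (the projectivization of Fin 6 → ℚ over ℚ) at which exactly 9 of these twelve forms vanish has exactly 4 elements, namely the coordinate points [1:0:0:0:0:0], [0:1:0:0:0:0], [0:0:1:0:0:0], [0:0:0:1:0:0]. -/

import Mathlib

/-- The `i`-th coordinate function on `ℚ⁶` as a linear form. -/
noncomputable def coordForm (i : Fin 6) : (Fin 6 → ℚ) →ₗ[ℚ] ℚ :=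
  LinearMap.proj i

/-- The twelve linear forms cutting out the branch divisor of Ahlgren's fivefold:
`x, x−u, x−v, y, y−u, y−v, z, z−u, z−v, t, t−u, t−v` on `ℚ⁶` with coordinates
`(x, y, z, t, u, v)`. -/
noncomputable def ahlgrenForms : Fin 12 → ((Fin 6 → ℚ) →ₗ[ℚ] ℚ) :=
  ![coordForm 0, coordForm 0 - coordForm 4, coordForm 0 - coordForm 5,
    coordForm 1, coordForm 1 - coordForm 4, coordForm 1 - coordForm 5,
    coordForm 2, coordForm 2 - coordForm 4, coordForm 2 - coordForm 5,
    coordForm 3, coordForm 3 - coordForm 4, coordForm 3 - coordForm 5]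

/-- Count of vanishing forms per coordinate block. -/
def blk (a u v : ℚ) : ℕ :=
  (if a = 0 then 1 else 0) + (if a - u = 0 then 1 else 0) + (if a - v = 0 then 1 else 0)

/-- Total number of the twelve forms vanishing at a vector. -/
noncomputable def cnt (w : Fin 6 → ℚ) : ℕ :=
  (Finset.univ.filter fun k : Fin 12 => ahlgrenForms k w = 0).card

lemma cnt_eq (w : Fin 6 → ℚ) :
    cnt w = blk (w 0) (w 4) (w 5) + blk (w 1) (w 4) (w 5)
      + blk (w 2) (w 4) (w 5) + blk (w 3) (w 4) (w 5) := by
  rw [cnt, Finset.card_filter]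
  simp only [cnt, blk, Finset.card_filter, Fin.sum_univ_succ, Fin.sum_univ_one,
    ahlgrenForms, coordForm, Matrix.cons_val_zero, Matrix.cons_val_succ,
    LinearMap.sub_apply, LinearMap.proj_apply]
  ac_rfl

lemma blk_le (a u v : ℚ) : blk a u v ≤ 3 := by
  unfold blk; split_ifs <;> omega

lemma blk3 {a u v : ℚ} (h : blk a u v = 3) : a = 0 ∧ u = 0 ∧ v = 0 := by
  unfold blk at h
  split_ifs at h with h1 h2 h3 <;> try omega
  exact ⟨h1, by linarith, by linarith⟩

lemma blk00 (a : ℚ) : blk a 0 0 = if a = 0 then 3 else 0 := by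
  rcases eq_or_ne a 0 with h | h <;> simp [blk, h]

lemma cnt_smul {c : ℚ} (hc : c ≠ 0) (w : Fin 6 → ℚ) : cnt (c • w) = cnt w := by
  unfold cnt
  congr 1
  ext k
  simp [map_smul, hc]

lemma cnt_rep_mk (v : Fin 6 → ℚ) (hv : v ≠ 0) :
    cnt (Projectivization.mk ℚ v hv).rep = cnt v := by
  obtain ⟨a, ha⟩ := (Projectivization.mk_eq_mk_iff ℚ _ _
    (Projectivization.rep_nonzero _) hv).mp (Projectivization.mk_rep _)
  rw [← ha, Units.smul_def]
  exact cnt_smul (Units.ne_zero a) v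

lemma key (w : Fin 6 → ℚ) (h : cnt w = 9) :
    w 4 = 0 ∧ w 5 = 0 ∧
    ((w 0 ≠ 0 ∧ w 1 = 0 ∧ w 2 = 0 ∧ w 3 = 0) ∨
     (w 0 = 0 ∧ w 1 ≠ 0 ∧ w 2 = 0 ∧ w 3 = 0) ∨
     (w 0 = 0 ∧ w 1 = 0 ∧ w 2 ≠ 0 ∧ w 3 = 0) ∨
     (w 0 = 0 ∧ w 1 = 0 ∧ w 2 = 0 ∧ w 3 ≠ 0)) := by
  rw [cnt_eq] at h
  have l0 := blk_le (w 0) (w 4) (w 5)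
  have l1 := blk_le (w 1) (w 4) (w 5)
  have l2 := blk_le (w 2) (w 4) (w 5)
  have l3 := blk_le (w 3) (w 4) (w 5)
  have hd : blk (w 0) (w 4) (w 5) = 3 ∨ blk (w 1) (w 4) (w 5) = 3 ∨
      blk (w 2) (w 4) (w 5) = 3 ∨ blk (w 3) (w 4) (w 5) = 3 := by omega
  have huv : w 4 = 0 ∧ w 5 = 0 := by
    rcases hd with h' | h' | h' | h' <;> exact ⟨(blk3 h').2.1, (blk3 h').2.2⟩
  obtain ⟨hu, hv⟩ := huv
  rw [hu, hv, blk00, blk00, blk00, blk00] at h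
  refine ⟨hu, hv, ?_⟩
  by_cases h0 : w 0 = 0 <;> by_cases h1 : w 1 = 0 <;> by_cases h2 : w 2 = 0 <;>
    by_cases h3 : w 3 = 0 <;> simp [h0, h1, h2, h3] at h ⊢

lemma mk_single_ne {i j : Fin 6} (hij : i ≠ j) (hi : (Pi.single i 1 : Fin 6 → ℚ) ≠ 0)
    (hj : (Pi.single j 1 : Fin 6 → ℚ) ≠ 0) :
    Projectivization.mk ℚ (Pi.single i 1) hi ≠ Projectivization.mk ℚ (Pi.single j 1) hj := by
  rw [Ne, Projectivization.mk_eq_mk_iff]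
  rintro ⟨a, ha⟩
  have := congrFun ha i
  simp [Pi.single_apply, hij, Units.smul_def] at this

lemma cnt_single0 : cnt (Pi.single (0:Fin 6) (1:ℚ)) = 9 := by rw [cnt_eq]; simp [blk]
lemma cnt_single1 : cnt (Pi.single (1:Fin 6) (1:ℚ)) = 9 := by rw [cnt_eq]; simp [blk]
lemma cnt_single2 : cnt (Pi.single (2:Fin 6) (1:ℚ)) = 9 := by rw [cnt_eq]; simp [blk]
lemma cnt_single3 : cnt (Pi.single (3:Fin 6) (1:ℚ)) = 9 := by rw [cnt_eq]; simp [blk]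

lemma single_ne_zero' (i : Fin 6) : (Pi.single i 1 : Fin 6 → ℚ) ≠ 0 := by
  intro h; simpa using congrFun h i

lemma eq_mk_of (P : Projectivization ℚ (Fin 6 → ℚ)) (i : Fin 6)
    (hi : P.rep i ≠ 0) (hrest : ∀ j, j ≠ i → P.rep j = 0) :
    P = Projectivization.mk ℚ (Pi.single i 1) (single_ne_zero' i) := by
  conv_lhs => rw [← Projectivization.mk_rep P]
  rw [Projectivization.mk_eq_mk_iff]
  refine ⟨Units.mk0 (P.rep i) hi, ?_⟩
  funext j
  rcases eq_or_ne j i with rfl | hji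
  · simp [Units.smul_def]
  · simp [Units.smul_def, Pi.single_apply, hji, hrest j hji]

/-- Entry `T₁₁` of Table 1 of Cynk–Hulek: the points of `ℙ⁵(ℚ)` at which exactly 9 of the
twelve forms vanish are precisely the four coordinate points
`[1:0:0:0:0:0], [0:1:0:0:0:0], [0:0:1:0:0:0], [0:0:0:1:0:0]`. -/
theorem ahlgren_mult_nine_points :
    {P : Projectivization ℚ (Fin 6 → ℚ) |
        (Finset.univ.filter fun k : Fin 12 => ahlgrenForms k P.rep = 0).card = 9} =
      {Projectivization.mk ℚ (Pi.single 0 1)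
          (by intro h; simpa using congrFun h 0),
       Projectivization.mk ℚ (Pi.single 1 1)
          (by intro h; simpa using congrFun h 1),
       Projectivization.mk ℚ (Pi.single 2 1)
          (by intro h; simpa using congrFun h 2),
       Projectivization.mk ℚ (Pi.single 3 1)
          (by intro h; simpa using congrFun h 3)} ∧
    {P : Projectivization ℚ (Fin 6 → ℚ) |
        (Finset.univ.filter fun k : Fin 12 => ahlgrenForms k P.rep = 0).card = 9}.ncard = 4 := by
  have heq : {P : Projectivization ℚ (Fin 6 → ℚ) |
        (Finset.univ.filter fun k : Fin 12 => ahlgrenForms k P.rep = 0).card = 9} =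
      {Projectivization.mk ℚ (Pi.single 0 1)
          (by intro h; simpa using congrFun h 0),
       Projectivization.mk ℚ (Pi.single 1 1)
          (by intro h; simpa using congrFun h 1),
       Projectivization.mk ℚ (Pi.single 2 1)
          (by intro h; simpa using congrFun h 2),
       Projectivization.mk ℚ (Pi.single 3 1)
          (by intro h; simpa using congrFun h 3)} := by
    ext P
    simp only [Set.mem_setOf_eq, Set.mem_insert_iff, Set.mem_singleton_iff]
    constructor
    · intro h
      have h' : cnt P.rep = 9 := h
      obtain ⟨hu, hv, hc⟩ := key P.rep h'
      rcases hc with ⟨h0, h1, h2, h3⟩ | ⟨h0, h1, h2, h3⟩ | ⟨h0, h1, h2, h3⟩ | ⟨h0, h1, h2, h3⟩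
      · exact Or.inl (eq_mk_of P 0 h0 (by intro j hj; fin_cases j <;> simp_all))
      · exact Or.inr (Or.inl (eq_mk_of P 1 h1 (by intro j hj; fin_cases j <;> simp_all)))
      · exact Or.inr (Or.inr (Or.inl (eq_mk_of P 2 h2 (by intro j hj; fin_cases j <;> simp_all))))
      · exact Or.inr (Or.inr (Or.inr (eq_mk_of P 3 h3 (by intro j hj; fin_cases j <;> simp_all))))
    · rintro (rfl | rfl | rfl | rfl)
      · exact (cnt_rep_mk _ _).trans cnt_single0
      · exact (cnt_rep_mk _ _).trans cnt_single1
      · exact (cnt_rep_mk _ _).trans cnt_single2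
      · exact (cnt_rep_mk _ _).trans cnt_single3
  refine ⟨heq, ?_⟩
  rw [heq]
  rw [Set.ncard_insert_of_notMem (by
        simp only [Set.mem_insert_iff, Set.mem_singleton_iff]
        push_neg
        exact ⟨mk_single_ne (by decide) _ _, mk_single_ne (by decide) _ _,
          mk_single_ne (by decide) _ _⟩),
      Set.ncard_insert_of_notMem (by
        simp only [Set.mem_insert_iff, Set.mem_singleton_iff]
        push_neg
        exact ⟨mk_single_ne (by decide) _ _, mk_single_ne (by decide) _ _⟩),
      Set.ncard_insert_of_notMem (by
        simp only [Set.mem_singleton_iff]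
        exact mk_single_ne (by decide) _ _),
      Set.ncard_singleton]
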